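/- In any weighted tree T on vertex set V where for every pair (u,v) the weight of the minimum-weight edge on the tree path between u and v equals the (u,v)-mincut value of an underlying undirected unweighted graph G with m edges (a Gomory–Hu tree), the sum of weights of all tree edges is at least m and at most 2m. -/

import Mathlib

open Finset

/-- Number of edges crossing the cut `(S, V \ S)` in a finite undirected
multigraph given by a symmetric edge-multiplicity function `e`. -/
def crossCount {V : Type*} [Fintype V] [DecidableEq V]
    (e : V → V → ℕ) (S : Finset V) : ℕ :=
  ∑ u ∈ S, ∑ v ∈ Sᶜ, e u v

/-- `k` is the value of the minimum `(a,b)`-cut: some cut separating `a` from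
`b` has `k` crossing edges, and every such cut has at least `k`. -/
def IsMinCutValue {V : Type*} [Fintype V] [DecidableEq V]
    (e : V → V → ℕ) (a b : V) (k : ℕ) : Prop :=
  (∃ S : Finset V, a ∈ S ∧ b ∉ S ∧ crossCount e S = k) ∧
    ∀ S : Finset V, a ∈ S → b ∉ S → k ≤ crossCount e S

/-- Any walk endpoint pair remains mutually reachable, or reaches `a` or `b`,
after deleting the edge `s(a,b)`. -/
lemma walk_reach_or_aux {V : Type*} {T : SimpleGraph V} (a b : V) {v t : V}
    (p : T.Walk v t) :
    (T.deleteEdges {s(a,b)}).Reachable v t ∨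
      (T.deleteEdges {s(a,b)}).Reachable v a ∨
      (T.deleteEdges {s(a,b)}).Reachable v b := by
  induction p with
  | nil => exact Or.inl (SimpleGraph.Reachable.refl _)
  | cons h q ih =>
    rename_i u x _
    by_cases hsep : s(u, x) = s(a, b)
    · rw [Sym2.eq_iff] at hsep
      rcases hsep with ⟨rfl, rfl⟩ | ⟨rfl, rfl⟩
      · exact Or.inr (Or.inl (SimpleGraph.Reachable.refl _))
      · exact Or.inr (Or.inr (SimpleGraph.Reachable.refl _))
    · have hadj : (T.deleteEdges {s(a,b)}).Adj u x := by
        simp only [SimpleGraph.deleteEdges_adj, Set.mem_singleton_iff]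
        exact ⟨h, hsep⟩
      rcases ih with h1 | h1 | h1
      · exact Or.inl (hadj.reachable.trans h1)
      · exact Or.inr (Or.inl (hadj.reachable.trans h1))
      · exact Or.inr (Or.inr (hadj.reachable.trans h1))

lemma walk_reach_or {V : Type*} {T : SimpleGraph V} {a v : V} (b : V)
    (p : T.Walk v a) :
    (T.deleteEdges {s(a,b)}).Reachable v a ∨ (T.deleteEdges {s(a,b)}).Reachable v b := by
  rcases walk_reach_or_aux a b p with h | h | h
  · exact Or.inl h
  · exact Or.inl h
  · exact Or.inr h

lemma tree_bridge {V : Type*} {T : SimpleGraph V} (hT : T.IsAcyclic) {a b : V}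
    (hab : T.Adj a b) : ¬ (T.deleteEdges {s(a,b)}).Reachable a b :=
  ((SimpleGraph.isAcyclic_iff_forall_adj_isBridge.mp hT hab) : _)

lemma exists_sep {V : Type*} [DecidableEq V] {T : SimpleGraph V} (hT : T.IsTree) {u v : V}
    (huv : u ≠ v) : ∃ p ∈ T.edgeSet, ¬ (T.deleteEdges {p}).Reachable u v := by
  obtain ⟨q0⟩ := hT.isConnected.preconnected u v
  set P : T.Walk u v := (q0.toPath : T.Walk u v) with hP
  have hPpath : P.IsPath := q0.toPath.2
  have hnn : ¬ P.Nil := SimpleGraph.Walk.not_nil_of_ne huv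
  have hlen : P.edges ≠ [] := by
    intro h
    apply hnn
    rw [SimpleGraph.Walk.nil_iff_length_eq, ← SimpleGraph.Walk.length_edges, h]
    rfl
  obtain ⟨p, hp⟩ := List.exists_mem_of_ne_nil _ hlen
  refine ⟨p, P.edges_subset_edgeSet hp, ?_⟩
  rintro ⟨r⟩
  have hrp : ∀ e ∈ (r.toPath : (T.deleteEdges {p}).Walk u v).edges, e ∈ T.edgeSet \ {p} := by
    intro e he
    have := (r.toPath : (T.deleteEdges {p}).Walk u v).edges_subset_edgeSet he
    rwa [SimpleGraph.edgeSet_deleteEdges] at this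
  set r1 : T.Walk u v := (r.toPath : (T.deleteEdges {p}).Walk u v).transfer T
    (fun e he => (hrp e he).1) with hr1
  have hr1path : r1.IsPath := (r.toPath.2).transfer _
  have hEq : r1 = P :=
    congrArg Subtype.val (hT.IsAcyclic.path_unique ⟨r1, hr1path⟩ ⟨P, hPpath⟩)
  have hpnot : p ∉ r1.edges := by
    rw [hr1, SimpleGraph.Walk.edges_transfer]
    intro hmem
    exact (hrp p hmem).2 rfl
  rw [hEq] at hpnot
  exact hpnot hp

set_option maxHeartbeats 2000000 in
open scoped Classical in
/-- **Gomory–Hu tree weight is Θ(m).**  Let `G` be a finite undirected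
unweighted multigraph (edge multiplicities `e`, handshake `2m = Σ deg`), and
let `T` be a Gomory–Hu tree of `G`: a tree on the vertex set whose every edge
`(a,b)` has weight `w a b` equal to the `(a,b)`-mincut value of `G`, and such
that removing the edge `(a,b)` from `T` partitions the vertices into a minimum
`(a,b)`-cut of `G`.  Then the sum of the weights of all tree edges is at least
`m` and at most `2m`. -/
theorem gomory_hu_tree_total_weight {V : Type*} [Fintype V] [DecidableEq V]
    (e : V → V → ℕ) (hesymm : ∀ u v, e u v = e v u) (hloop : ∀ v, e v v = 0)
    (m : ℕ) (hm : 2 * m = ∑ u, ∑ v, e u v)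
    (T : SimpleGraph V) (hT : T.IsTree)
    (w : V → V → ℕ) (hwsymm : ∀ a b, w a b = w b a)
    (hGH : ∀ a b, T.Adj a b → IsMinCutValue e a b (w a b))
    (hpart : ∀ a b, T.Adj a b →
      crossCount e (univ.filter
        (fun v => (T.deleteEdges {s(a, b)}).Reachable a v)) = w a b) :
    m ≤ ∑ p ∈ T.edgeFinset, Sym2.lift ⟨w, hwsymm⟩ p ∧
      ∑ p ∈ T.edgeFinset, Sym2.lift ⟨w, hwsymm⟩ p ≤ 2 * m := by
  classical
  have hconn := hT.isConnected
  -- per-edge lemma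
  have key : ∀ p ∈ T.edgeFinset, 2 * Sym2.lift ⟨w, hwsymm⟩ p
      = ∑ u, ∑ v, if (T.deleteEdges {p}).Reachable u v then 0 else e u v := by
    intro p hp
    induction p using Sym2.ind with
    | _ a b =>
      rw [SimpleGraph.mem_edgeFinset, SimpleGraph.mem_edgeSet] at hp
      set D := T.deleteEdges {s(a,b)} with hD
      set S : Finset V := univ.filter (fun v => D.Reachable a v) with hSdef
      have hS : crossCount e S = w a b := hpart a b hp
      have hbridge : ¬ D.Reachable a b := tree_bridge hT.IsAcyclic hp
      have hall : ∀ x : V, D.Reachable a x ∨ D.Reachable b x := by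
        intro x
        obtain ⟨q⟩ := hconn.preconnected x a
        rcases walk_reach_or b q with h | h
        · exact Or.inl h.symm
        · exact Or.inr h.symm
      have hmemS : ∀ x, x ∈ S ↔ D.Reachable a x := by
        intro x; simp [hSdef]
      have hsep : ∀ u v : V, (¬ D.Reachable u v) ↔
          ((u ∈ S ∧ v ∉ S) ∨ (u ∉ S ∧ v ∈ S)) := by
        intro u v
        simp only [hmemS]
        constructor
        · intro h
          rcases hall u with hu | hu
          · exact Or.inl ⟨hu, fun hv => h (hu.symm.trans hv)⟩
          · have hu' : ¬ D.Reachable a u := fun h' => hbridge (h'.trans hu.symm)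
            rcases hall v with hv | hv
            · exact Or.inr ⟨hu', hv⟩
            · exact absurd (hu.symm.trans hv) h
        · rintro (⟨hu, hv⟩ | ⟨hu, hv⟩) hre
          · exact hv (hu.trans hre)
          · exact hu (hv.trans hre.symm)
      have hreachS : ∀ u ∈ S, ∀ v ∈ S, D.Reachable u v := by
        intro u hu v hv
        rw [hmemS] at hu hv
        exact hu.symm.trans hv
      have hreachC : ∀ u ∈ Sᶜ, ∀ v ∈ Sᶜ, D.Reachable u v := by
        intro u hu v hv
        rw [Finset.mem_compl, hmemS] at hu hv
        rcases hall u with h | h; · exact absurd h hu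
        rcases hall v with h' | h'; · exact absurd h' hv
        exact h.symm.trans h'
      have hcompl : crossCount e Sᶜ = crossCount e S := by
        unfold crossCount
        rw [compl_compl, Finset.sum_comm]
        exact Finset.sum_congr rfl fun u _ => Finset.sum_congr rfl fun v _ => hesymm v u
      have hLHS : (∑ u, ∑ v, if D.Reachable u v then 0 else e u v)
          = crossCount e S + crossCount e Sᶜ := by
        rw [← Finset.sum_add_sum_compl S]
        congr 1
        · refine Finset.sum_congr rfl fun u hu => ?_
          rw [← Finset.sum_add_sum_compl S]
          have h1 : (∑ v ∈ S, if D.Reachable u v then 0 else e u v) = 0 :=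
            Finset.sum_eq_zero fun v hv => if_pos (hreachS u hu v hv)
          have h2 : (∑ v ∈ Sᶜ, if D.Reachable u v then 0 else e u v)
              = ∑ v ∈ Sᶜ, e u v :=
            Finset.sum_congr rfl fun v hv =>
              if_neg ((hsep u v).mpr (Or.inl ⟨hu, Finset.mem_compl.mp hv⟩))
          rw [h1, h2, zero_add]
        · refine Finset.sum_congr rfl fun u hu => ?_
          rw [← Finset.sum_add_sum_compl S]
          have h1 : (∑ v ∈ S, if D.Reachable u v then 0 else e u v)
              = ∑ v ∈ S, e u v :=
            Finset.sum_congr rfl fun v hv =>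
              if_neg ((hsep u v).mpr (Or.inr ⟨Finset.mem_compl.mp hu, hv⟩))
          have h2 : (∑ v ∈ Sᶜ, if D.Reachable u v then 0 else e u v) = 0 :=
            Finset.sum_eq_zero fun v hv => if_pos (hreachC u hu v hv)
          rw [h1, h2, add_zero]
          rw [compl_compl]
      show 2 * w a b = ∑ u, ∑ v, if D.Reachable u v then 0 else e u v
      rw [← hS, hLHS, hcompl, two_mul]
  -- lower bound
  have hlow : 2 * m ≤ 2 * ∑ p ∈ T.edgeFinset, Sym2.lift ⟨w, hwsymm⟩ p := by
    rw [hm, Finset.mul_sum]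
    calc (∑ u, ∑ v, e u v)
        ≤ ∑ u, ∑ v, ∑ p ∈ T.edgeFinset,
            (if (T.deleteEdges {p}).Reachable u v then 0 else e u v) := by
          refine Finset.sum_le_sum fun u _ => Finset.sum_le_sum fun v _ => ?_
          by_cases huv : u = v
          · subst huv; rw [hloop]; exact Nat.zero_le _
          · obtain ⟨p, hpE, hpsep⟩ := exists_sep hT huv
            have hpF : p ∈ T.edgeFinset := SimpleGraph.mem_edgeFinset.mpr hpE
            calc e u v = (if (T.deleteEdges {p}).Reachable u v then 0 else e u v) :=
                  (if_neg hpsep).symm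
              _ ≤ ∑ p ∈ T.edgeFinset,
                    (if (T.deleteEdges {p}).Reachable u v then 0 else e u v) :=
                  Finset.single_le_sum
                    (f := fun p => if (T.deleteEdges {p}).Reachable u v then 0 else e u v)
                    (fun _ _ => Nat.zero_le _) hpF
      _ = ∑ u, ∑ p ∈ T.edgeFinset, ∑ v,
            (if (T.deleteEdges {p}).Reachable u v then 0 else e u v) :=
          Finset.sum_congr rfl fun u _ => Finset.sum_comm
      _ = ∑ p ∈ T.edgeFinset, ∑ u, ∑ v,
            (if (T.deleteEdges {p}).Reachable u v then 0 else e u v) :=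
          Finset.sum_comm
      _ = ∑ p ∈ T.edgeFinset, 2 * Sym2.lift ⟨w, hwsymm⟩ p :=
          Finset.sum_congr rfl fun p hp => (key p hp).symm
      _ = ∑ p ∈ T.edgeFinset, 2 * Sym2.lift ⟨w, hwsymm⟩ p := rfl
  -- weight at most degree of each endpoint
  have hdeg1 : ∀ a b : V, T.Adj a b → w a b ≤ ∑ v, e a v := by
    intro a b hab
    have h1 := (hGH a b hab).2 {a} (Finset.mem_singleton_self a)
      (by simp [hab.ne'])
    refine h1.trans ?_
    unfold crossCount
    rw [Finset.sum_singleton]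
    exact Finset.sum_le_sum_of_subset (Finset.subset_univ _)
  have hdeg2 : ∀ a b : V, T.Adj a b → w a b ≤ ∑ v, e b v := by
    intro a b hab
    have h1 := (hGH a b hab).2 ({b}ᶜ) (by simp [hab.ne]) (by simp)
    refine h1.trans ?_
    unfold crossCount
    rw [compl_compl]
    calc (∑ u ∈ ({b}ᶜ : Finset V), ∑ v ∈ ({b} : Finset V), e u v)
        = ∑ u ∈ ({b}ᶜ : Finset V), e u b :=
          Finset.sum_congr rfl fun u _ => Finset.sum_singleton _ _
      _ ≤ ∑ u, e u b := Finset.sum_le_sum_of_subset (Finset.subset_univ _)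
      _ = ∑ u, e b u := Finset.sum_congr rfl fun u _ => (hesymm u b)
  -- root
  have hne : Nonempty V := hconn.nonempty
  obtain ⟨r⟩ := hne
  have hexP : ∀ p ∈ T.edgeFinset,
      ∃ x, x ∈ p ∧ ¬ (T.deleteEdges {p}).Reachable r x := by
    intro p hp
    induction p using Sym2.ind with
    | _ a b =>
      rw [SimpleGraph.mem_edgeFinset, SimpleGraph.mem_edgeSet] at hp
      have hbridge : ¬ (T.deleteEdges {s(a,b)}).Reachable a b :=
        tree_bridge hT.IsAcyclic hp
      by_cases hra : (T.deleteEdges {s(a,b)}).Reachable r a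
      · exact ⟨b, Sym2.mem_mk_right a b, fun h => hbridge (hra.symm.trans h)⟩
      · exact ⟨a, Sym2.mem_mk_left a b, hra⟩
  obtain ⟨f, hfP⟩ : ∃ f : Sym2 V → V, ∀ p ∈ T.edgeFinset,
      f p ∈ p ∧ ¬ (T.deleteEdges {p}).Reachable r (f p) := by
    have h : ∀ p : Sym2 V, ∃ x : V,
        p ∈ T.edgeFinset → (x ∈ p ∧ ¬ (T.deleteEdges {p}).Reachable r x) := by
      intro p
      by_cases hp : p ∈ T.edgeFinset
      · obtain ⟨x, hx⟩ := hexP p hp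
        exact ⟨x, fun _ => hx⟩
      · exact ⟨r, fun h' => absurd h' hp⟩
    choose f hf using h
    exact ⟨f, fun p hp => hf p hp⟩
  have hinj : ∀ p1 ∈ T.edgeFinset, ∀ p2 ∈ T.edgeFinset, f p1 = f p2 → p1 = p2 := by
    intro p1 h1 p2 h2 hf
    by_contra hne12
    obtain ⟨hx1, hr1⟩ := hfP p1 h1
    rw [hf] at hx1 hr1
    obtain ⟨hx2, hr2⟩ := hfP p2 h2
    set x := f p2 with hx
    have spec1 := Sym2.other_spec hx1
    have spec2 := Sym2.other_spec hx2
    set a := Sym2.Mem.other hx1 with hadef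
    set c := Sym2.Mem.other hx2 with hcdef
    have hTadj1 : T.Adj x a := by
      rw [← SimpleGraph.mem_edgeSet, spec1, ← SimpleGraph.mem_edgeFinset]
      exact h1
    -- step 1: r reaches a in T - p1
    have hra : (T.deleteEdges {p1}).Reachable r a := by
      obtain ⟨q⟩ := hconn.preconnected r x
      rcases walk_reach_or a q with h | h
      · rw [spec1] at h; exact absurd h hr1
      · rwa [spec1] at h
    obtain ⟨q⟩ := hra
    have hxsup : x ∉ q.support := by
      intro hxs
      exact hr1 ⟨q.takeUntil x hxs⟩
    have hp2not : p2 ∉ q.edges := by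
      intro hpe
      rw [← spec2] at hpe
      exact hxsup (q.fst_mem_support_of_mem_edges hpe)
    have hqT : ∀ e' ∈ q.edges, e' ∈ T.edgeSet := fun e' he' =>
      SimpleGraph.edgeSet_mono (SimpleGraph.deleteEdges_le _) (q.edges_subset_edgeSet he')
    set q1 : T.Walk r a := q.transfer T hqT with hq1
    have hq1e : q1.edges = q.edges := q.edges_transfer hqT
    have hq2 : (T.deleteEdges {p2}).Reachable r a :=
      ⟨q1.toDeleteEdges {p2} (by
        intro e' he'
        rw [hq1e] at he'
        simp only [Set.mem_singleton_iff]
        intro hcon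
        exact hp2not (hcon ▸ he'))⟩
    have hadj2 : (T.deleteEdges {p2}).Adj a x := by
      simp only [SimpleGraph.deleteEdges_adj, Set.mem_singleton_iff]
      refine ⟨hTadj1.symm, ?_⟩
      intro hcon
      apply hne12
      rw [← spec1, ← hcon, Sym2.eq_swap]
    exact hr2 (hq2.trans hadj2.reachable)
  have hup : ∑ p ∈ T.edgeFinset, Sym2.lift ⟨w, hwsymm⟩ p ≤ 2 * m := by
    calc ∑ p ∈ T.edgeFinset, Sym2.lift ⟨w, hwsymm⟩ p
        ≤ ∑ p ∈ T.edgeFinset, ∑ v, e (f p) v := by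
          refine Finset.sum_le_sum fun p hp => ?_
          obtain ⟨hmem, -⟩ := hfP p hp
          revert hmem
          induction p using Sym2.ind with
          | _ a b =>
            intro hmem
            rw [SimpleGraph.mem_edgeFinset, SimpleGraph.mem_edgeSet] at hp
            rw [Sym2.lift_mk]
            rcases Sym2.mem_iff.mp hmem with h | h
            · rw [h]; exact hdeg1 a b hp
            · rw [h]; exact hdeg2 a b hp
      _ = ∑ x ∈ T.edgeFinset.image f, ∑ v, e x v := by rw [Finset.sum_image hinj]
      _ ≤ ∑ x, ∑ v, e x v := Finset.sum_le_sum_of_subset (Finset.subset_univ _)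
      _ = 2 * m := hm.symm
  exact ⟨Nat.le_of_mul_le_mul_left hlow (by norm_num), hup⟩
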